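/- Let p be an odd prime and let t be a primitive root modulo p (a generator of the multiplicative group (ℤ/pℤ)ˣ). Consider the matrices A = [[1,0],[1,1]], B = [[1,0],[0,t]], C = [[0,1],[-1,-1]] in GL(2, 𝔽_p). Then the images Ā, B̄, C̄ of A, B, C in PGL(2,p) = GL(2,𝔽_p)/Z, where Z is the center of GL(2,𝔽_p) (the nonzero scalar matrices), generate the whole group PGL(2,p). -/

import Mathlib

open Matrix

lemma aux_lowpow {F : Type*} [CommRing F] (n : ℕ) :
    (!![1, 0; 1, 1] : Matrix (Fin 2) (Fin 2) F) ^ n = !![1, 0; (n : F), 1] := by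
  induction n with
  | zero => simp [Matrix.one_fin_two]
  | succ n ih => rw [pow_succ, ih, Matrix.mul_fin_two]; push_cast; ring_nf

lemma aux_diagpow {F : Type*} [CommRing F] (a : F) (n : ℕ) :
    (!![1, 0; 0, a] : Matrix (Fin 2) (Fin 2) F) ^ n = !![1, 0; 0, a ^ n] := by
  induction n with
  | zero => simp [Matrix.one_fin_two]
  | succ n ih => rw [pow_succ, ih, Matrix.mul_fin_two]; ring_nf

lemma aux_tmat {F : Type*} [Field F] (i j : Fin 2) (hij : i ≠ j) (c : F)
    (h : i = 0) : Matrix.transvection i j c = !![1, c; 0, 1] := by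
  subst h
  have hj : j = 1 := by omega
  subst hj
  ext a b
  fin_cases a <;> fin_cases b <;> simp [Matrix.transvection, Matrix.single, Matrix.one_apply]

lemma aux_tmat' {F : Type*} [Field F] (i j : Fin 2) (hij : i ≠ j) (c : F)
    (h : i = 1) : Matrix.transvection i j c = !![1, 0; c, 1] := by
  subst h
  have hj : j = 0 := by omega
  subst hj
  ext a b
  fin_cases a <;> fin_cases b <;> simp [Matrix.transvection, Matrix.single, Matrix.one_apply]

lemma aux_tshape {F : Type*} [Field F] (ts : TransvectionStruct (Fin 2) F) :
    ∃ c : F, ts.toMatrix = !![1, c; 0, 1] ∨ ts.toMatrix = !![1, 0; c, 1] := by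
  obtain ⟨i, j, hij, c⟩ := ts
  refine ⟨c, ?_⟩
  rcases (by omega : i = 0 ∨ i = 1) with h | h
  · exact Or.inl (aux_tmat i j hij c h)
  · exact Or.inr (aux_tmat' i j hij c h)

/-- For an odd prime `p` and a primitive root `t` modulo `p`, the images of
`A = [[1,0],[1,1]]`, `B = [[1,0],[0,t]]`, `C = [[0,1],[-1,-1]]` in
`PGL(2,p) = GL(2,𝔽_p) ⧸ center` generate the whole group `PGL(2,p)`. -/
theorem stmt6 (p : ℕ) [Fact p.Prime] (hp : Odd p)
    (t : (ZMod p)ˣ) (ht : ∀ x : (ZMod p)ˣ, x ∈ Subgroup.zpowers t)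
    (A B C : GL (Fin 2) (ZMod p))
    (hA : (A : Matrix (Fin 2) (Fin 2) (ZMod p)) = !![1, 0; 1, 1])
    (hB : (B : Matrix (Fin 2) (Fin 2) (ZMod p)) = !![1, 0; 0, (t : ZMod p)])
    (hC : (C : Matrix (Fin 2) (Fin 2) (ZMod p)) = !![0, 1; -1, -1]) :
    Subgroup.closure
        ({QuotientGroup.mk' (Subgroup.center (GL (Fin 2) (ZMod p))) A,
          QuotientGroup.mk' (Subgroup.center (GL (Fin 2) (ZMod p))) B,
          QuotientGroup.mk' (Subgroup.center (GL (Fin 2) (ZMod p))) C} :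
          Set (GL (Fin 2) (ZMod p) ⧸ Subgroup.center (GL (Fin 2) (ZMod p)))) = ⊤ := by
  set K : Subgroup (GL (Fin 2) (ZMod p)) :=
    Subgroup.closure {A, B, C} ⊔ Subgroup.center _ with hK
  have hAK : A ∈ K := Subgroup.mem_sup_left
    (show A ∈ Subgroup.closure {A, B, C} from Subgroup.subset_closure (by simp))
  have hBK : B ∈ K := Subgroup.mem_sup_left
    (show B ∈ Subgroup.closure {A, B, C} from Subgroup.subset_closure (by simp))
  have hCK : C ∈ K := Subgroup.mem_sup_left
    (show C ∈ Subgroup.closure {A, B, C} from Subgroup.subset_closure (by simp))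
  -- scalar matrices
  have hscal : ∀ a : (ZMod p)ˣ, ∃ z : GL (Fin 2) (ZMod p),
      (z : Matrix (Fin 2) (Fin 2) (ZMod p)) = (a : ZMod p) • 1 ∧ z ∈ K := by
    intro a
    refine ⟨⟨(a : ZMod p) • 1, ((a⁻¹ : (ZMod p)ˣ) : ZMod p) • 1, ?_, ?_⟩, rfl, ?_⟩
    · rw [smul_mul_smul_comm, mul_one, ← Units.val_mul, mul_inv_cancel]; simp
    · rw [smul_mul_smul_comm, mul_one, ← Units.val_mul, inv_mul_cancel]; simp
    · refine Subgroup.mem_sup_right (Subgroup.mem_center_iff.2 fun g => ?_)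
      ext : 1
      simp only [Units.val_mul]
      show (g : Matrix (Fin 2) (Fin 2) (ZMod p)) * ((a : ZMod p) • 1) =
        ((a : ZMod p) • 1) * (g : Matrix (Fin 2) (Fin 2) (ZMod p))
      rw [Matrix.mul_smul, Matrix.smul_mul, mul_one, one_mul]
  -- E21
  have hE21 : ∀ x : ZMod p, ∃ g : GL (Fin 2) (ZMod p),
      (g : Matrix (Fin 2) (Fin 2) (ZMod p)) = !![1, 0; x, 1] ∧ g ∈ K := by
    intro x
    refine ⟨A ^ x.val, ?_, pow_mem hAK _⟩
    rw [Units.val_pow_eq_pow_val, hA, aux_lowpow, ZMod.natCast_val, ZMod.cast_id]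
  -- w
  obtain ⟨w, hw, hwK⟩ : ∃ w : GL (Fin 2) (ZMod p),
      (w : Matrix (Fin 2) (Fin 2) (ZMod p)) = !![0, 1; -1, 0] ∧ w ∈ K := by
    refine ⟨A * C, ?_, mul_mem hAK hCK⟩
    rw [Units.val_mul, hA, hC, Matrix.mul_fin_two]
    norm_num
  have hwinv : ((w⁻¹ : GL (Fin 2) (ZMod p)) : Matrix (Fin 2) (Fin 2) (ZMod p))
      = !![0, -1; 1, 0] := by
    rw [Matrix.coe_units_inv, hw, Matrix.inv_def, Matrix.adjugate_fin_two,
      Matrix.det_fin_two]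
    norm_num
  -- E12
  have hE12 : ∀ x : ZMod p, ∃ g : GL (Fin 2) (ZMod p),
      (g : Matrix (Fin 2) (Fin 2) (ZMod p)) = !![1, x; 0, 1] ∧ g ∈ K := by
    intro x
    obtain ⟨e, he, heK⟩ := hE21 (-x)
    refine ⟨w * e * w⁻¹, ?_, mul_mem (mul_mem hwK heK) (inv_mem hwK)⟩
    rw [Units.val_mul, Units.val_mul, hw, he, hwinv, Matrix.mul_fin_two,
      Matrix.mul_fin_two]
    norm_num
  -- diagonal with unit
  have hDiagU : ∀ u : (ZMod p)ˣ, ∃ g : GL (Fin 2) (ZMod p),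
      (g : Matrix (Fin 2) (Fin 2) (ZMod p)) = !![1, 0; 0, (u : ZMod p)] ∧ g ∈ K := by
    intro u
    obtain ⟨k, hk⟩ := ht u
    have key : ∀ k : ℤ, ((B ^ k : GL (Fin 2) (ZMod p)) : Matrix (Fin 2) (Fin 2) (ZMod p))
        = !![1, 0; 0, ((t ^ k : (ZMod p)ˣ) : ZMod p)] := by
      intro k
      have hnat : ∀ n : ℕ, ((B ^ n : GL (Fin 2) (ZMod p)) : Matrix (Fin 2) (Fin 2) (ZMod p))
          = !![1, 0; 0, ((t ^ n : (ZMod p)ˣ) : ZMod p)] := by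
        intro n
        rw [Units.val_pow_eq_pow_val, hB, aux_diagpow, Units.val_pow_eq_pow_val]
      cases k with
      | ofNat n => simpa using hnat n
      | negSucc n =>
        rw [zpow_negSucc, zpow_negSucc, Matrix.coe_units_inv, hnat (n + 1),
          Matrix.inv_def, Matrix.adjugate_fin_two, Matrix.det_fin_two]
        have hne : ((t ^ (n + 1) : (ZMod p)ˣ) : ZMod p) ≠ 0 := Units.ne_zero _
        rw [Units.val_inv_eq_inv_val]
        ext i j
        fin_cases i <;> fin_cases j <;>
          simp [Ring.inverse_eq_inv', hne]
    exact ⟨B ^ k, by rw [key, show t ^ k = u from hk], zpow_mem hBK k⟩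
  -- general invertible diagonal
  have hDiag : ∀ D : Fin 2 → ZMod p, D 0 ≠ 0 → D 1 ≠ 0 →
      ∃ g : GL (Fin 2) (ZMod p),
        (g : Matrix (Fin 2) (Fin 2) (ZMod p)) = Matrix.diagonal D ∧ g ∈ K := by
    intro D h0 h1
    obtain ⟨z, hz, hzK⟩ := hscal (Units.mk0 (D 0) h0)
    obtain ⟨g, hg, hgK⟩ := hDiagU (Units.mk0 (D 1 / D 0) (div_ne_zero h1 h0))
    refine ⟨z * g, ?_, mul_mem hzK hgK⟩
    rw [Units.val_mul, hz, hg]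
    ext i j
    fin_cases i <;> fin_cases j <;>
      simp [Matrix.diagonal, Matrix.one_fin_two, Matrix.smul_mul] <;>
      field_simp
  -- transvection lists
  have hList : ∀ L : List (TransvectionStruct (Fin 2) (ZMod p)),
      ∃ g : GL (Fin 2) (ZMod p),
        (g : Matrix (Fin 2) (Fin 2) (ZMod p)) = (L.map TransvectionStruct.toMatrix).prod
          ∧ g ∈ K := by
    intro L
    induction L with
    | nil => exact ⟨1, by simp, one_mem K⟩
    | cons hd tl ih =>
      obtain ⟨g, hg, hgK⟩ := ih
      obtain ⟨c, hc | hc⟩ := aux_tshape hd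
      · obtain ⟨e, he, heK⟩ := hE12 c
        exact ⟨e * g, by rw [Units.val_mul, he, hg]; simp [hc], mul_mem heK hgK⟩
      · obtain ⟨e, he, heK⟩ := hE21 c
        exact ⟨e * g, by rw [Units.val_mul, he, hg]; simp [hc], mul_mem heK hgK⟩
  -- every element of GL is in K
  have hTop : ∀ g : GL (Fin 2) (ZMod p), g ∈ K := by
    intro g
    obtain ⟨L, L', D, hD⟩ :=
      Matrix.Pivot.exists_list_transvec_mul_diagonal_mul_list_transvec
        (g : Matrix (Fin 2) (Fin 2) (ZMod p))
    have hdet : (g : Matrix (Fin 2) (Fin 2) (ZMod p)).det ≠ 0 := by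
      have : IsUnit (g : Matrix (Fin 2) (Fin 2) (ZMod p)).det :=
        (Matrix.isUnit_iff_isUnit_det _).1 g.isUnit
      exact this.ne_zero
    have h0 : D 0 ≠ 0 := by
      intro h
      apply hdet
      rw [hD, Matrix.det_mul, Matrix.det_mul, Matrix.det_diagonal,
        Fin.prod_univ_two, h]
      ring
    have h1 : D 1 ≠ 0 := by
      intro h
      apply hdet
      rw [hD, Matrix.det_mul, Matrix.det_mul, Matrix.det_diagonal,
        Fin.prod_univ_two, h]
      ring
    obtain ⟨g1, hg1, hg1K⟩ := hList L
    obtain ⟨g2, hg2, hg2K⟩ := hDiag D h0 h1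
    obtain ⟨g3, hg3, hg3K⟩ := hList L'
    have : g = g1 * g2 * g3 := by
      ext : 1
      rw [Units.val_mul, Units.val_mul, hg1, hg2, hg3, ← hD]
    rw [this]
    exact mul_mem (mul_mem hg1K hg2K) hg3K
  -- conclude in the quotient
  set f := QuotientGroup.mk' (Subgroup.center (GL (Fin 2) (ZMod p))) with hf
  set S : Set (GL (Fin 2) (ZMod p) ⧸ Subgroup.center (GL (Fin 2) (ZMod p))) :=
    {f A, f B, f C} with hS
  apply Subgroup.comap_injective (QuotientGroup.mk'_surjective
    (Subgroup.center (GL (Fin 2) (ZMod p))))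
  rw [Subgroup.comap_top, eq_top_iff]
  rintro g -
  have hg := hTop g
  have hle : K ≤ Subgroup.comap f (Subgroup.closure S) := by
    rw [hK]
    apply sup_le
    · rw [Subgroup.closure_le]
      intro x hx
      simp only [Set.mem_insert_iff, Set.mem_singleton_iff] at hx
      rcases hx with rfl | rfl | rfl <;>
        · rw [SetLike.mem_coe, Subgroup.mem_comap]
          exact Subgroup.subset_closure (by simp [hS])
    · intro z hz
      rw [Subgroup.mem_comap]
      have : f z = 1 := (QuotientGroup.eq_one_iff z).2 hz
      rw [this]
      exact one_mem _
  exact hle hg
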